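/- arXiv:math/9908090 — 4 statements merged into one kernel-verified Lean document; each statement's English description precedes it below -/
import Mathlib

section
/- Let 1 ≤ i ≤ n−1 and let w ∈ S_n satisfy ℓ(w·s_i) < ℓ(w). Then for any finite sequence i_1,…,i_k of indices in {1,…,n−1}, setting M := A_{i_1}∘A_{i_2}∘⋯∘A_{i_k}, one has ⟨A_i(M(𝔖_w)), 𝔖_w⟩ = −q·⟨M(𝔖_w), 𝔖_w⟩, where ⟨g, 𝔖_w⟩ denotes the coefficient of the image of 𝔖_w when the image of g in P_n/I_n is expanded in the Schubert basis. -/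
open MvPolynomial

noncomputable section

/-- The ground field `F = ℚ(q)`, rational functions over `ℚ`. -/
abbrev F : Type := RatFunc ℚ

/-- The indeterminate `q`. -/
def q : F := RatFunc.X

/-- The polynomial ring `P_n = F[x_1, …, x_n]` (variables indexed `0, …, n-1`). -/
abbrev Pn (n : ℕ) : Type := MvPolynomial (Fin n) F

/-- The adjacent transposition `s_i` swapping positions `i` and `i+1` (0-indexed). -/
def transp (n i : ℕ) (h : i + 1 < n) : Equiv.Perm (Fin n) :=
  Equiv.swap ⟨i, by omega⟩ ⟨i + 1, h⟩

/-- Multiplication by the variable `x_j`. -/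
def Xop {n : ℕ} (j : Fin n) : Pn n →ₗ[F] Pn n := LinearMap.mulLeft F (X j)

/-- A family of candidate divided-difference operators. -/
abbrev DDFam (n : ℕ) := ∀ i : ℕ, i + 1 < n → (Pn n →ₗ[F] Pn n)

/-- `dd` is the family of divided difference operators:
`(x_i - x_{i+1}) · ∂_i f = f - s_i f`.  This determines `dd` uniquely. -/
def IsDD {n : ℕ} (dd : DDFam n) : Prop :=
  ∀ (i : ℕ) (h : i + 1 < n) (f : Pn n),
    (X (⟨i, by omega⟩ : Fin n) - X ⟨i + 1, h⟩) * dd i h f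
      = f - rename (⇑(transp n i h)) f

/-- The q-commutator operator `A_i = ∂_i ∘ X_i - q · X_i ∘ ∂_i`. -/
def Aop {n : ℕ} (dd : DDFam n) (i : ℕ) (h : i + 1 < n) : Pn n →ₗ[F] Pn n :=
  dd i h ∘ₗ Xop ⟨i, by omega⟩ - q • (Xop (⟨i, by omega⟩ : Fin n) ∘ₗ dd i h)

/-- The operator `B_i = -(∂_i ∘ X_{i+1} - q · X_{i+1} ∘ ∂_i)`. -/
def Bop {n : ℕ} (dd : DDFam n) (i : ℕ) (h : i + 1 < n) : Pn n →ₗ[F] Pn n :=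
  -(dd i h ∘ₗ Xop ⟨i + 1, h⟩ - q • (Xop (⟨i + 1, h⟩ : Fin n) ∘ₗ dd i h))

/-- Swap the exponents of `x_i` and `x_{i+1}` in a monomial exponent vector. -/
def swapIdx (n i : ℕ) (h : i + 1 < n) (d : Fin n →₀ ℕ) : Fin n →₀ ℕ :=
  Finsupp.equivMapDomain (transp n i h) d

/-- Value of `R_i` on the monomial with exponent vector `d`. -/
def Rval {n : ℕ} (i : ℕ) (h : i + 1 < n) (d : Fin n →₀ ℕ) : Pn n :=
  if d ⟨i + 1, h⟩ < d ⟨i, by omega⟩ then q • monomial (swapIdx n i h d) (1 : F)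
  else if d ⟨i, by omega⟩ < d ⟨i + 1, h⟩ then
    (1 - q) • monomial d (1 : F) + monomial (swapIdx n i h d) (1 : F)
  else monomial d (1 : F)

/-- The operator `R_i`, the linear extension of `Rval` from monomials. -/
def Rop {n : ℕ} (i : ℕ) (h : i + 1 < n) : Pn n →ₗ[F] Pn n :=
  (basisMonomials (Fin n) F).constr F (Rval i h)

/-- Value of `R*_i` on the monomial with exponent vector `d`. -/
def Rstarval {n : ℕ} (i : ℕ) (h : i + 1 < n) (d : Fin n →₀ ℕ) : Pn n :=
  if d ⟨i + 1, h⟩ ≤ d ⟨i, by omega⟩ then monomial (swapIdx n i h d) (1 : F)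
  else (1 - q) • monomial d (1 : F) + q • monomial (swapIdx n i h d) (1 : F)

/-- The operator `R*_i`, the linear extension of `Rstarval` from monomials. -/
def Rstarop {n : ℕ} (i : ℕ) (h : i + 1 < n) : Pn n →ₗ[F] Pn n :=
  (basisMonomials (Fin n) F).constr F (Rstarval i h)

/-- `f` is a symmetric polynomial. -/
def symmP {n : ℕ} (f : Pn n) : Prop :=
  ∀ σ : Equiv.Perm (Fin n), rename (⇑σ) f = f

/-- The ideal `I_n` generated by symmetric polynomials with zero constant term. -/
def In (n : ℕ) : Ideal (Pn n) :=
  Ideal.span {f : Pn n | symmP f ∧ constantCoeff f = 0}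

/-- The quotient map `P_n → P_n / I_n` as an `F`-linear map. -/
def mkI (n : ℕ) : Pn n →ₗ[F] (Pn n ⧸ In n) :=
  (Ideal.Quotient.mkₐ F (In n)).toLinearMap

/-- `R^k`: the image in `P_n/I_n` of the homogeneous polynomials of degree `k`. -/
def RkSub (n k : ℕ) : Submodule F (Pn n ⧸ In n) :=
  Submodule.map (mkI n) (homogeneousSubmodule (Fin n) F k)

/-- The Coxeter length of a permutation: its number of inversions. -/
def len {n : ℕ} (w : Equiv.Perm (Fin n)) : ℕ :=
  (Finset.univ.filter (fun p : Fin n × Fin n => p.1 < p.2 ∧ w p.2 < w p.1)).card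

/-- The staircase monomial `x_1^{n-1} x_2^{n-2} ⋯ x_{n-1}`. -/
def staircase (n : ℕ) : Pn n := ∏ j : Fin n, (X j : Pn n) ^ (n - 1 - (j : ℕ))

/-- `S` is the family of Schubert polynomials: `S w₀` is the staircase monomial, and
`∂_i 𝔖_w = 𝔖_{w s_i}` whenever `ℓ(w s_i) < ℓ(w)`.  This determines `S` uniquely. -/
def IsSchubert {n : ℕ} (dd : DDFam n) (S : Equiv.Perm (Fin n) → Pn n) : Prop :=
  S (Fin.revPerm) = staircase n ∧
  ∀ (w : Equiv.Perm (Fin n)) (i : ℕ) (h : i + 1 < n),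
    len (w * transp n i h) < len w → dd i h (S w) = S (w * transp n i h)

/-- The 3-cycle `(a, b, c)`, sending `a ↦ b`, `b ↦ c`, `c ↦ a`. -/
def cyc3 {n : ℕ} (a b c : Fin n) : Equiv.Perm (Fin n) :=
  Equiv.swap a c * Equiv.swap a b

/-- The Hecke algebra relations for a family of operators. -/
def HeckeRels {n : ℕ} (T : ∀ i : ℕ, i + 1 < n → (Pn n →ₗ[F] Pn n)) : Prop :=
  (∀ (i : ℕ) (h : i + 2 < n),
      T i (by omega) ∘ₗ (T (i + 1) (by omega) ∘ₗ T i (by omega))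
        = T (i + 1) (by omega) ∘ₗ (T i (by omega) ∘ₗ T (i + 1) (by omega))) ∧
  (∀ (i j : ℕ) (hi : i + 1 < n) (hj : j + 1 < n), (i + 1 < j ∨ j + 1 < i) →
      T i hi ∘ₗ T j hj = T j hj ∘ₗ T i hi) ∧
  (∀ (i : ℕ) (h : i + 1 < n),
      T i h ∘ₗ T i h = (1 - q) • T i h + q • LinearMap.id)

/-- Composition `T_{j₁} ∘ T_{j₂} ∘ ⋯ ∘ T_{j_k}` along a list of indices. -/
def compFam {n : ℕ} (T : ℕ → (Pn n →ₗ[F] Pn n)) : List ℕ → (Pn n →ₗ[F] Pn n)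
  | [] => LinearMap.id
  | j :: l => T j ∘ₗ compFam T l

/-- Totalized version of `Aop` (identity outside the allowed index range). -/
def Atot {n : ℕ} (dd : DDFam n) (j : ℕ) : Pn n →ₗ[F] Pn n :=
  if h : j + 1 < n then Aop dd j h else LinearMap.id

/-- Totalized version of `Rop` (identity outside the allowed index range). -/
def Rtot (n : ℕ) (j : ℕ) : Pn n →ₗ[F] Pn n :=
  if h : j + 1 < n then Rop j h else LinearMap.id

/-- The (0-indexed) index set `J_μ`: all `j ∈ {0, …, n-2}` such that `j+1` is not a
partial sum `μ_1 + ⋯ + μ_k` of the partition. -/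
def Jlist (n : ℕ) (μ : List ℕ) : List ℕ :=
  (List.range (n - 1)).filter
    (fun j => (List.range (μ.length + 1)).all (fun k => (μ.take k).sum != j + 1))

/-- The value `w(a)` of a permutation, as a function on naturals. -/
def permVal {n : ℕ} (w : Equiv.Perm (Fin n)) (a : ℕ) : ℕ :=
  if h : a < n then ((w ⟨a, h⟩ : Fin n) : ℕ) else a

open scoped Classical in
/-- The factor `m_q` attached to the block of positions `p, p+1, …, p+m-1`:
`(-q)^j` if, within the block, `w` has descents exactly at the first `j` places
(i.e. `w` decreases on the first `j+1` entries and then increases), and `0` otherwise. -/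
def blockWeight {n : ℕ} (w : Equiv.Perm (Fin n)) (p m : ℕ) : F :=
  if h : ∃ j, j < m ∧ ∀ a : ℕ, p ≤ a → a + 1 < p + m →
      (permVal w (a + 1) < permVal w a ↔ a < p + j)
  then (-q) ^ h.choose else 0

/-- `weight_q^μ(w) = ∏ m_q(w_i)`, the product of the block factors over the blocks of `μ`. -/
def weightq {n : ℕ} (μ : List ℕ) (w : Equiv.Perm (Fin n)) : F :=
  ∏ t ∈ Finset.range μ.length, blockWeight w ((μ.take t).sum) (μ.getD t 0)

/-- `μ` is a partition of `n`. -/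
def IsPartition (n : ℕ) (μ : List ℕ) : Prop :=
  List.Pairwise (· ≥ ·) μ ∧ (∀ x ∈ μ, 0 < x) ∧ μ.sum = n

/-- The operator `D_i f = c_i · f + P_i(x_i, x_{i+1}) · ∂_i f`. -/
def Dop {n : ℕ} (dd : DDFam n) (c : ℕ → F) (Pp : ℕ → MvPolynomial (Fin 2) F)
    (i : ℕ) (h : i + 1 < n) : Pn n →ₗ[F] Pn n :=
  c i • LinearMap.id +
    LinearMap.mulLeft F (aeval ![(X ⟨i, by omega⟩ : Pn n), X ⟨i + 1, h⟩] (Pp i)) ∘ₗ dd i h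

/-- `f` has integer coefficients. -/
def IsIntPoly {n : ℕ} (f : Pn n) : Prop :=
  ∀ d : Fin n →₀ ℕ, ∃ z : ℤ, coeff d f = (z : F)


set_option maxHeartbeats 1000000
set_option synthInstance.maxHeartbeats 200000

section AuxLemmas

variable {n : ℕ}

lemma mkI_apply (n : ℕ) (f : Pn n) : mkI n f = Ideal.Quotient.mk (In n) f := rfl

lemma transp_fst (i : ℕ) (h : i + 1 < n) :
    transp n i h ⟨i, by omega⟩ = ⟨i + 1, h⟩ :=
  Equiv.swap_apply_left _ _

lemma transp_snd (i : ℕ) (h : i + 1 < n) :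
    transp n i h ⟨i + 1, h⟩ = ⟨i, by omega⟩ :=
  Equiv.swap_apply_right _ _

lemma transp_sq (i : ℕ) (h : i + 1 < n) : transp n i h * transp n i h = 1 :=
  Equiv.swap_mul_self _ _

lemma Xsub_ne (i : ℕ) (h : i + 1 < n) :
    (X (⟨i, by omega⟩ : Fin n) : Pn n) - X ⟨i + 1, h⟩ ≠ 0 := by
  refine sub_ne_zero.mpr fun he => ?_
  have := X_injective (R := F) he
  simp only [Fin.mk.injEq] at this
  omega

lemma rename_transp_transp (i : ℕ) (h : i + 1 < n) (f : Pn n) :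
    rename (⇑(transp n i h)) (rename (⇑(transp n i h)) f) = f := by
  rw [rename_rename]
  have : (⇑(transp n i h)) ∘ (⇑(transp n i h)) = id := by
    funext x
    simp [transp, Equiv.swap_apply_self]
  rw [this, rename_id, AlgHom.id_apply]

variable {dd : DDFam n}

lemma dd_invariant (hdd : IsDD dd) (i : ℕ) (h : i + 1 < n) (f : Pn n) :
    rename (⇑(transp n i h)) (dd i h f) = dd i h f := by
  apply mul_left_cancel₀ (Xsub_ne i h)
  have h1 := hdd i h f
  have h2 := congrArg (rename (⇑(transp n i h))) h1
  rw [map_mul, map_sub, map_sub, rename_X, rename_X, transp_fst, transp_snd,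
    rename_transp_transp] at h2
  rw [h1]
  linear_combination -h2

lemma dd_of_invariant (hdd : IsDD dd) (i : ℕ) (h : i + 1 < n) (f : Pn n)
    (hf : rename (⇑(transp n i h)) f = f) : dd i h f = 0 := by
  have h1 := hdd i h f
  rw [hf, sub_self] at h1
  rcases mul_eq_zero.mp h1 with h2 | h2
  · exact absurd h2 (Xsub_ne i h)
  · exact h2

lemma dd_dd (hdd : IsDD dd) (i : ℕ) (h : i + 1 < n) (f : Pn n) :
    dd i h (dd i h f) = 0 :=
  dd_of_invariant hdd i h _ (dd_invariant hdd i h f)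

lemma dd_mul (hdd : IsDD dd) (i : ℕ) (h : i + 1 < n) (r f : Pn n) :
    dd i h (r * f) = dd i h r * f + rename (⇑(transp n i h)) r * dd i h f := by
  apply mul_left_cancel₀ (Xsub_ne i h)
  have h1 := hdd i h (r * f)
  have h2 := hdd i h r
  have h3 := hdd i h f
  rw [map_mul (rename (⇑(transp n i h))) r f] at h1
  linear_combination h1 - f * h2 - rename (⇑(transp n i h)) r * h3

lemma dd_X (hdd : IsDD dd) (i : ℕ) (h : i + 1 < n) :
    dd i h (X ⟨i, by omega⟩) = 1 := by
  apply mul_left_cancel₀ (Xsub_ne i h)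
  have h2 := hdd i h (X ⟨i, by omega⟩)
  rw [h2, rename_X, transp_fst, mul_one]

lemma Aop_apply (hdd : IsDD dd) (i : ℕ) (h : i + 1 < n) (g : Pn n) :
    Aop dd i h g
      = g + X ⟨i + 1, h⟩ * dd i h g - C q * (X ⟨i, by omega⟩ * dd i h g) := by
  have h1 : Aop dd i h g
      = dd i h (X ⟨i, by omega⟩ * g) - q • (X ⟨i, by omega⟩ * dd i h g) := by
    simp [Aop, Xop, LinearMap.sub_apply, LinearMap.comp_apply, LinearMap.smul_apply,
      LinearMap.mulLeft_apply]
  rw [h1, dd_mul hdd, dd_X hdd, rename_X, transp_fst, one_mul, smul_eq_C_mul]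

lemma dd_mem_In (hdd : IsDD dd) (i : ℕ) (h : i + 1 < n) :
    ∀ f ∈ In n, dd i h f ∈ In n := by
  intro f hf
  refine Submodule.span_induction ?_ ?_ ?_ ?_ hf
  · intro x hx
    rw [dd_of_invariant hdd i h x (hx.1 _)]
    exact zero_mem _
  · rw [map_zero]; exact zero_mem _
  · intro x y hx hy px py
    rw [map_add]; exact add_mem px py
  · intro a x hx px
    rw [smul_eq_mul, dd_mul hdd]
    exact add_mem (Ideal.mul_mem_left _ _ hx) (Ideal.mul_mem_left _ _ px)

lemma swap_mk_lt (i : ℕ) (h : i + 1 < n) (x y : Fin n) (hxy : x < y)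
    (hne : ¬(x = ⟨i, by omega⟩ ∧ y = ⟨i + 1, h⟩)) :
    Equiv.swap (⟨i, by omega⟩ : Fin n) ⟨i + 1, h⟩ x
      < Equiv.swap (⟨i, by omega⟩ : Fin n) ⟨i + 1, h⟩ y := by
  rw [Equiv.swap_apply_def, Equiv.swap_apply_def]
  split_ifs <;>
    simp only [Fin.lt_def, Fin.ext_iff, not_and] at * <;> omega

lemma len_mul_transp_ne (i : ℕ) (h : i + 1 < n) (u : Equiv.Perm (Fin n)) :
    len (u * transp n i h) ≠ len u := by
  classical
  have hab : (⟨i, by omega⟩ : Fin n) < ⟨i + 1, h⟩ := by simp [Fin.lt_def]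
  set a : Fin n := ⟨i, by omega⟩
  set b : Fin n := ⟨i + 1, h⟩
  have hσ : transp n i h = Equiv.swap a b := rfl
  set v := u * transp n i h with hv
  have hvx : ∀ x, v x = u (Equiv.swap a b x) := fun x => rfl
  have hva : v a = u b := by rw [hvx, Equiv.swap_apply_left]
  have hvb : v b = u a := by rw [hvx, Equiv.swap_apply_right]
  set Iu := Finset.univ.filter (fun p : Fin n × Fin n => p.1 < p.2 ∧ u p.2 < u p.1) with hIu
  set Iv := Finset.univ.filter (fun p : Fin n × Fin n => p.1 < p.2 ∧ v p.2 < v p.1) with hIv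
  have hlenu : len u = Iu.card := rfl
  have hlenv : len v = Iv.card := rfl
  have hswap_lt : ∀ x y : Fin n, x < y → (x, y) ≠ (a, b) →
      Equiv.swap a b x < Equiv.swap a b y := by
    intro x y hxy hne
    have hne' : ¬(x = a ∧ y = b) := by simpa [Prod.ext_iff] using hne
    exact swap_mk_lt i h x y hxy hne'
  have hmem1 : ∀ p : Fin n × Fin n, p ∈ Iv.erase (a, b) →
      (Equiv.swap a b p.1, Equiv.swap a b p.2) ∈ Iu.erase (a, b) := by
    intro p hp
    rw [Finset.mem_erase, hIv, Finset.mem_filter] at hp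
    obtain ⟨hpne, -, hp12, hpinv⟩ := hp
    rw [Finset.mem_erase, hIu, Finset.mem_filter]
    refine ⟨?_, Finset.mem_univ _, hswap_lt _ _ hp12 hpne, ?_⟩
    · intro hcon
      rw [Prod.ext_iff] at hcon
      have h1 : p.1 = b := by
        have := congrArg (Equiv.swap a b) hcon.1
        rwa [Equiv.swap_apply_self, Equiv.swap_apply_left] at this
      have h2 : p.2 = a := by
        have := congrArg (Equiv.swap a b) hcon.2
        rwa [Equiv.swap_apply_self, Equiv.swap_apply_right] at this
      rw [h1, h2] at hp12
      exact absurd hp12 (asymm hab)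
    · simpa [hvx] using hpinv
  have hmem2 : ∀ p : Fin n × Fin n, p ∈ Iu.erase (a, b) →
      (Equiv.swap a b p.1, Equiv.swap a b p.2) ∈ Iv.erase (a, b) := by
    intro p hp
    rw [Finset.mem_erase, hIu, Finset.mem_filter] at hp
    obtain ⟨hpne, -, hp12, hpinv⟩ := hp
    rw [Finset.mem_erase, hIv, Finset.mem_filter]
    refine ⟨?_, Finset.mem_univ _, hswap_lt _ _ hp12 hpne, ?_⟩
    · intro hcon
      rw [Prod.ext_iff] at hcon
      have h1 : p.1 = b := by
        have := congrArg (Equiv.swap a b) hcon.1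
        rwa [Equiv.swap_apply_self, Equiv.swap_apply_left] at this
      have h2 : p.2 = a := by
        have := congrArg (Equiv.swap a b) hcon.2
        rwa [Equiv.swap_apply_self, Equiv.swap_apply_right] at this
      rw [h1, h2] at hp12
      exact absurd hp12 (asymm hab)
    · simpa [hvx, Equiv.swap_apply_self] using hpinv
  have hcard : (Iv.erase (a, b)).card = (Iu.erase (a, b)).card := by
    refine Finset.card_nbij' (fun p => (Equiv.swap a b p.1, Equiv.swap a b p.2))
      (fun p => (Equiv.swap a b p.1, Equiv.swap a b p.2)) hmem1 hmem2 ?_ ?_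
    · intro p hp
      simp [Equiv.swap_apply_self]
    · intro p hp
      simp [Equiv.swap_apply_self]
  have huab : u a ≠ u b := fun he => hab.ne (u.injective he)
  have hmemu : ((a, b) ∈ Iu) ↔ u b < u a := by
    simp [hIu, hab]
  have hmemv : ((a, b) ∈ Iv) ↔ u a < u b := by
    simp [hIv, hab, hva, hvb]
  rw [hlenu, hlenv]
  rcases lt_or_gt_of_ne huab with hlt | hlt
  · have h1 : (a, b) ∉ Iu := fun hm => absurd (hmemu.mp hm) (asymm hlt)
    have h2 : (a, b) ∈ Iv := hmemv.mpr hlt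
    have e1 : Iu.erase (a, b) = Iu := Finset.erase_eq_of_notMem h1
    have e2 : (Iv.erase (a, b)).card + 1 = Iv.card := Finset.card_erase_add_one h2
    rw [e1] at hcard
    omega
  · have h1 : (a, b) ∈ Iu := hmemu.mpr hlt
    have h2 : (a, b) ∉ Iv := fun hm => absurd (hmemv.mp hm) (asymm hlt)
    have e1 : Iv.erase (a, b) = Iv := Finset.erase_eq_of_notMem h2
    have e2 : (Iu.erase (a, b)).card + 1 = Iu.card := Finset.card_erase_add_one h1
    rw [e1] at hcard
    omega

lemma dd_S_zero (hdd : IsDD dd) {S : Equiv.Perm (Fin n) → Pn n}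
    (hS : IsSchubert dd S) (i : ℕ) (h : i + 1 < n) (u : Equiv.Perm (Fin n))
    (hu : ¬ len (u * transp n i h) < len u) : dd i h (S u) = 0 := by
  have hne := len_mul_transp_ne i h u
  have hlt : len u < len (u * transp n i h) := by omega
  have huu : (u * transp n i h) * transp n i h = u := by
    rw [mul_assoc, transp_sq, mul_one]
  have h2 : dd i h (S (u * transp n i h)) = S u := by
    have := hS.2 (u * transp n i h) i h (by rw [huu]; exact hlt)
    rwa [huu] at this
  rw [← h2, dd_dd hdd]

lemma key_vanish (hdd : IsDD dd) {S : Equiv.Perm (Fin n) → Pn n}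
    (hS : IsSchubert dd S) (B : Module.Basis (Equiv.Perm (Fin n)) F (Pn n ⧸ In n))
    (hB : ∀ v, B v = mkI n (S v)) (i : ℕ) (h : i + 1 < n)
    (w : Equiv.Perm (Fin n)) (hw : len (w * transp n i h) < len w)
    (p : Pn n) (hp : rename (⇑(transp n i h)) p = p) :
    B.repr (mkI n p) w = 0 := by
  classical
  set c := B.repr (mkI n p) with hc
  set p' : Pn n := ∑ u ∈ c.support, c u • S u with hp'
  have hmk : mkI n p' = mkI n p := by
    rw [hp', map_sum]
    have h1 : ∀ u : Equiv.Perm (Fin n), mkI n (c u • S u) = c u • B u := by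
      intro u; rw [map_smul, hB]
    rw [Finset.sum_congr rfl fun u _ => h1 u]
    have h2 := B.linearCombination_repr (mkI n p)
    rw [Finsupp.linearCombination_apply, Finsupp.sum] at h2
    exact h2
  have hmem : p - p' ∈ In n := by
    rw [← Ideal.Quotient.eq_zero_iff_mem, ← mkI_apply n, map_sub, hmk, sub_self]
  have hdp : dd i h p = 0 := dd_of_invariant hdd i h p hp
  have hdp' : dd i h p' ∈ In n := by
    have h1 : dd i h (p - p') ∈ In n := dd_mem_In hdd i h _ hmem
    rw [map_sub, hdp, zero_sub] at h1
    simpa using neg_mem h1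
  have hmk0 : mkI n (dd i h p') = 0 := by
    rw [mkI_apply n, Ideal.Quotient.eq_zero_iff_mem]
    exact hdp'
  set ψ : (Pn n ⧸ In n) →ₗ[F] F :=
    Finsupp.lapply (w * transp n i h) ∘ₗ (B.repr : (Pn n ⧸ In n) ≃ₗ[F] _).toLinearMap
    with hψ
  have hψdef : ∀ x, ψ x = B.repr x (w * transp n i h) := fun _ => rfl
  have heval : ∑ u ∈ c.support, c u • ψ (mkI n (dd i h (S u))) = 0 := by
    have h4 : ∑ u ∈ c.support, c u • ψ (mkI n (dd i h (S u)))
        = ψ (∑ u ∈ c.support, c u • mkI n (dd i h (S u))) := by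
      rw [map_sum]
      exact Finset.sum_congr rfl fun u _ => (map_smul ψ (c u) _).symm
    have hexp : (∑ u ∈ c.support, c u • mkI n (dd i h (S u)))
        = mkI n (dd i h p') := by
      rw [hp', map_sum, map_sum]
      exact Finset.sum_congr rfl fun u _ => by rw [map_smul, map_smul]
    rw [h4, hexp, hmk0, map_zero]
  have hterm : ∀ u ∈ c.support, u ≠ w →
      c u • ψ (mkI n (dd i h (S u))) = 0 := by
    intro u _ hune
    by_cases hu : len (u * transp n i h) < len u
    · rw [hS.2 u i h hu, ← hB, hψdef, B.repr_self, Finsupp.single_apply, if_neg,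
        smul_zero]
      intro he
      exact hune (mul_right_cancel he)
    · rw [dd_S_zero hdd hS i h u hu, map_zero, map_zero, smul_zero]
  have hwval : ψ (mkI n (dd i h (S w))) = 1 := by
    rw [hS.2 w i h hw, ← hB, hψdef, B.repr_self, Finsupp.single_apply, if_pos rfl]
  have hsum := Finset.sum_eq_single (s := c.support)
    (f := fun u => c u • ψ (mkI n (dd i h (S u)))) w
    hterm (fun hws => by simp only [Finsupp.notMem_support_iff.mp hws, zero_smul])
  rw [hsum] at heval
  simp only [hwval, smul_eq_mul, mul_one] at heval
  exact heval

end AuxLemmas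

set_option maxHeartbeats 1000000
set_option synthInstance.maxHeartbeats 200000

/-- Lemma 4.2, `⟨A_i M 𝔖_w, 𝔖_w⟩ = -q ⟨M 𝔖_w, 𝔖_w⟩` when `ℓ(w s_i) < ℓ(w)`. -/
theorem stmt5 (n : ℕ) (hn : 2 ≤ n) (dd : DDFam n) (hdd : IsDD dd)
    (S : Equiv.Perm (Fin n) → Pn n) (hS : IsSchubert dd S)
    (B : Module.Basis (Equiv.Perm (Fin n)) F (Pn n ⧸ In n)) (hB : ∀ v, B v = mkI n (S v))
    (i : ℕ) (h : i + 1 < n) (w : Equiv.Perm (Fin n))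
    (hw : len (w * transp n i h) < len w)
    (l : List ℕ) (hl : ∀ j ∈ l, j + 1 < n) :
    B.repr (mkI n (Aop dd i h (compFam (Atot dd) l (S w)))) w
      = -q * B.repr (mkI n (compFam (Atot dd) l (S w))) w := by
  set g := compFam (Atot dd) l (S w) with hg
  set h₀ := dd i h g with hh0
  set φ : Pn n →ₗ[F] F :=
    Finsupp.lapply w ∘ₗ ((B.repr : (Pn n ⧸ In n) →ₗ[F] _) ∘ₗ mkI n) with hφ
  have hφdef : ∀ p : Pn n, φ p = B.repr (mkI n p) w := fun p => rfl
  have hinv : rename (⇑(transp n i h)) h₀ = h₀ := dd_invariant hdd i h g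
  have hrel := hdd i h g
  have he_inv : rename (⇑(transp n i h)) (g - X ⟨i, by omega⟩ * h₀)
      = g - X ⟨i, by omega⟩ * h₀ := by
    rw [map_sub, map_mul, rename_X, transp_fst, hinv]
    linear_combination hrel
  have hs_inv : rename (⇑(transp n i h))
        (X (⟨i, by omega⟩ : Fin n) * h₀ + X ⟨i + 1, h⟩ * h₀)
      = X (⟨i, by omega⟩ : Fin n) * h₀ + X ⟨i + 1, h⟩ * h₀ := by
    rw [map_add, map_mul, map_mul, rename_X, rename_X, transp_fst, transp_snd, hinv]
    ring
  have he0 : φ (g - X ⟨i, by omega⟩ * h₀) = 0 :=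
    key_vanish hdd hS B hB i h w hw _ he_inv
  have hs0 : φ (X (⟨i, by omega⟩ : Fin n) * h₀ + X ⟨i + 1, h⟩ * h₀) = 0 :=
    key_vanish hdd hS B hB i h w hw _ hs_inv
  have hA : Aop dd i h g = (g - X ⟨i, by omega⟩ * h₀)
      + (X (⟨i, by omega⟩ : Fin n) * h₀ + X ⟨i + 1, h⟩ * h₀)
      - q • (X (⟨i, by omega⟩ : Fin n) * h₀) := by
    rw [Aop_apply hdd, smul_eq_C_mul]
    ring
  have hgsplit : g = (g - X ⟨i, by omega⟩ * h₀) + X ⟨i, by omega⟩ * h₀ := by ring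
  show φ (Aop dd i h g) = -q * φ g
  rw [hA, map_sub, map_add, map_smul, he0, hs0]
  rw [hgsplit, map_add, he0, zero_add, smul_eq_mul]
  ring


end
end

section
/- The operators R*_1,…,R*_{n−1} satisfy the Hecke algebra relations: R*_i∘R*_{i+1}∘R*_i = R*_{i+1}∘R*_i∘R*_{i+1} for all 1 ≤ i ≤ n−2; R*_i∘R*_j = R*_j∘R*_i whenever |i−j| > 1; and R*_i∘R*_i = (1−q)·R*_i + q·id for all 1 ≤ i ≤ n−1. -/
open MvPolynomial

noncomputable section

-- infrastructure
lemma Rstarop_monomial {n : ℕ} (i : ℕ) (h : i + 1 < n) (d : Fin n →₀ ℕ) :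
    Rstarop i h (monomial d (1 : F)) = Rstarval i h d := by
  have : monomial d (1:F) = basisMonomials (Fin n) F d := by simp
  rw [this, Rstarop, Module.Basis.constr_basis]

lemma swapIdx_apply {n i : ℕ} (h : i + 1 < n) (d : Fin n →₀ ℕ) (k : Fin n) :
    swapIdx n i h d k = d (transp n i h k) := by
  simp [swapIdx, transp, Finsupp.equivMapDomain_apply, Equiv.symm_swap]

lemma swapIdx_apply_fst {n i : ℕ} (h : i + 1 < n) (d : Fin n →₀ ℕ) (k : Fin n)
    (hk : (k : ℕ) = i) : swapIdx n i h d k = d ⟨i + 1, h⟩ := by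
  rw [swapIdx_apply]
  congr 1
  rw [transp, Equiv.swap_apply_def]
  split_ifs <;> simp_all [Fin.ext_iff] <;> omega

lemma swapIdx_apply_snd {n i : ℕ} (h : i + 1 < n) (d : Fin n →₀ ℕ) (k : Fin n)
    (hk : (k : ℕ) = i + 1) : swapIdx n i h d k = d ⟨i, by omega⟩ := by
  rw [swapIdx_apply]
  congr 1
  rw [transp, Equiv.swap_apply_def]
  split_ifs <;> simp_all [Fin.ext_iff] <;> omega

lemma swapIdx_apply_other {n i : ℕ} (h : i + 1 < n) (d : Fin n →₀ ℕ) (k : Fin n)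
    (h1 : (k : ℕ) ≠ i) (h2 : (k : ℕ) ≠ i + 1) : swapIdx n i h d k = d k := by
  rw [swapIdx_apply]
  congr 1
  rw [transp, Equiv.swap_apply_of_ne_of_ne]
  · exact fun hc => h1 (by rw [hc])
  · exact fun hc => h2 (by rw [hc])

lemma swapIdx_swapIdx {n i : ℕ} (h : i + 1 < n) (d : Fin n →₀ ℕ) :
    swapIdx n i h (swapIdx n i h d) = d := by
  ext k
  rw [swapIdx_apply, swapIdx_apply, transp, ← Equiv.Perm.mul_apply, Equiv.swap_mul_self,
    Equiv.Perm.one_apply]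

lemma swapIdx_eq_self {n i : ℕ} (h : i + 1 < n) (d : Fin n →₀ ℕ)
    (he : d ⟨i, by omega⟩ = d ⟨i + 1, h⟩) : swapIdx n i h d = d := by
  ext k
  rcases eq_or_ne (k : ℕ) i with hk | hk
  · rw [swapIdx_apply_fst h d k hk, ← he]; congr 1; exact Fin.ext hk.symm
  rcases eq_or_ne (k : ℕ) (i + 1) with hk2 | hk2
  · rw [swapIdx_apply_snd h d k hk2, he]; congr 1; exact Fin.ext hk2.symm
  · exact swapIdx_apply_other h d k hk hk2

lemma transp_braid {n i : ℕ} (h1 : i + 1 < n) (h2 : i + 2 < n) :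
    transp n i h1 * transp n (i + 1) h2 * transp n i h1
      = transp n (i + 1) h2 * transp n i h1 * transp n (i + 1) h2 := by
  set a : Fin n := ⟨i, by omega⟩
  set b : Fin n := ⟨i + 1, by omega⟩
  set c : Fin n := ⟨i + 2, by omega⟩
  have hab : a ≠ b := by simp [a, b, Fin.ext_iff]
  have hbc : b ≠ c := by simp [b, c, Fin.ext_iff]
  have hac : a ≠ c := by simp [a, c, Fin.ext_iff]
  have e1 : transp n i h1 = Equiv.swap a b := rfl
  have e2 : transp n (i + 1) h2 = Equiv.swap b c := rfl
  have L : Equiv.swap a b * Equiv.swap b c * Equiv.swap a b = Equiv.swap a c := by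
    have hL := Equiv.swap_mul_swap_mul_swap hbc.symm hac.symm
    rw [Equiv.swap_comm b a, Equiv.swap_comm c b] at hL
    exact hL
  have R : Equiv.swap b c * Equiv.swap a b * Equiv.swap b c = Equiv.swap c a :=
    Equiv.swap_mul_swap_mul_swap hab hac
  rw [e1, e2, L, R]
  exact Equiv.swap_comm a c

lemma swapIdx_braid {n i : ℕ} (h1 : i + 1 < n) (h2 : i + 2 < n) (d : Fin n →₀ ℕ) :
    swapIdx n i h1 (swapIdx n (i + 1) h2 (swapIdx n i h1 d))
      = swapIdx n (i + 1) h2 (swapIdx n i h1 (swapIdx n (i + 1) h2 d)) := by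
  ext k
  simp only [swapIdx_apply]
  congr 1
  rw [← Equiv.Perm.mul_apply, ← Equiv.Perm.mul_apply, ← Equiv.Perm.mul_apply,
    ← Equiv.Perm.mul_apply]
  rw [transp_braid h1 h2]

lemma Rop_le {n i : ℕ} (h : i + 1 < n) (d : Fin n →₀ ℕ)
    (hle : d ⟨i + 1, h⟩ ≤ d ⟨i, by omega⟩) :
    Rstarop i h (monomial d (1 : F)) = monomial (swapIdx n i h d) 1 := by
  rw [Rstarop_monomial, Rstarval, if_pos hle]

lemma Rop_lt {n i : ℕ} (h : i + 1 < n) (d : Fin n →₀ ℕ)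
    (hlt : d ⟨i, by omega⟩ < d ⟨i + 1, h⟩) :
    Rstarop i h (monomial d (1 : F))
      = (1 - q) • monomial d 1 + q • monomial (swapIdx n i h d) 1 := by
  rw [Rstarop_monomial, Rstarval, if_neg (not_le.mpr hlt)]

lemma swap_fst {n i : ℕ} (h : i + 1 < n) (d : Fin n →₀ ℕ) :
    swapIdx n i h d ⟨i, by omega⟩ = d ⟨i + 1, h⟩ := swapIdx_apply_fst h d _ rfl

lemma swap_snd {n i : ℕ} (h : i + 1 < n) (d : Fin n →₀ ℕ) :
    swapIdx n i h d ⟨i + 1, h⟩ = d ⟨i, by omega⟩ := swapIdx_apply_snd h d _ rfl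

theorem quad {n : ℕ} (i : ℕ) (h : i + 1 < n) :
    Rstarop i h ∘ₗ Rstarop i h
      = (1 - q) • (Rstarop (n := n) i h) + q • LinearMap.id := by
  apply (basisMonomials (Fin n) F).ext
  intro d
  simp only [coe_basisMonomials, LinearMap.comp_apply, LinearMap.add_apply,
    LinearMap.smul_apply, LinearMap.id_apply]
  rcases lt_trichotomy (d ⟨i, by omega⟩) (d ⟨i + 1, h⟩) with hlt | heq | hgt
  · rw [Rop_lt h d hlt, map_add, map_smul, map_smul, Rop_lt h d hlt,
      Rop_le h _ (by rw [swap_fst, swap_snd]; exact le_of_lt hlt),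
      swapIdx_swapIdx]
  · rw [Rop_le h d (le_of_eq heq.symm), swapIdx_eq_self h d heq,
      Rop_le h d (le_of_eq heq.symm), swapIdx_eq_self h d heq,
      ← add_smul, sub_add_cancel, one_smul]
  · rw [Rop_le h d (le_of_lt hgt),
      Rop_lt h _ (by rw [swap_fst, swap_snd]; exact hgt),
      swapIdx_swapIdx]

lemma transp_comm {n i j : ℕ} (hi : i + 1 < n) (hj : j + 1 < n)
    (hfar : i + 1 < j ∨ j + 1 < i) :
    transp n i hi * transp n j hj = transp n j hj * transp n i hi := by
  set a : Fin n := ⟨i, by omega⟩ with ha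
  set b : Fin n := ⟨i + 1, hi⟩ with hb
  set c : Fin n := ⟨j, by omega⟩ with hc
  set e : Fin n := ⟨j + 1, hj⟩ with he
  have hca : c ≠ a := by simp [ha, hc, Fin.ext_iff]; omega
  have hcb : c ≠ b := by simp [hb, hc, Fin.ext_iff]; omega
  have hea : e ≠ a := by simp [ha, he, Fin.ext_iff]; omega
  have heb : e ≠ b := by simp [hb, he, Fin.ext_iff]; omega
  have key := Equiv.swap_apply_apply (Equiv.swap a b) c e
  rw [Equiv.swap_apply_of_ne_of_ne hca hcb, Equiv.swap_apply_of_ne_of_ne hea heb] at key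
  have key2 : Equiv.swap c e * Equiv.swap a b = Equiv.swap a b * Equiv.swap c e := by
    conv_lhs => rw [key]
    rw [inv_mul_cancel_right]
  have e1 : transp n i hi = Equiv.swap a b := rfl
  have e2 : transp n j hj = Equiv.swap c e := rfl
  rw [e1, e2, key2]

lemma swapIdx_comm {n i j : ℕ} (hi : i + 1 < n) (hj : j + 1 < n)
    (hfar : i + 1 < j ∨ j + 1 < i) (d : Fin n →₀ ℕ) :
    swapIdx n i hi (swapIdx n j hj d) = swapIdx n j hj (swapIdx n i hi d) := by
  ext k
  simp only [swapIdx_apply]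
  rw [← Equiv.Perm.mul_apply, ← Equiv.Perm.mul_apply]
  rw [← transp_comm hi hj hfar]

lemma far_fst {n i j : ℕ} (hi : i + 1 < n) (hj : j + 1 < n)
    (hfar : i + 1 < j ∨ j + 1 < i) (d : Fin n →₀ ℕ) :
    swapIdx n j hj d ⟨i, by omega⟩ = d ⟨i, by omega⟩ :=
  swapIdx_apply_other hj d ⟨i, by omega⟩ (by simp; omega) (by simp; omega)

lemma far_snd {n i j : ℕ} (hi : i + 1 < n) (hj : j + 1 < n)
    (hfar : i + 1 < j ∨ j + 1 < i) (d : Fin n →₀ ℕ) :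
    swapIdx n j hj d ⟨i + 1, hi⟩ = d ⟨i + 1, hi⟩ :=
  swapIdx_apply_other hj d ⟨i + 1, hi⟩ (by simp; omega) (by simp; omega)

theorem commrel {n : ℕ} (i j : ℕ) (hi : i + 1 < n) (hj : j + 1 < n)
    (hfar : i + 1 < j ∨ j + 1 < i) :
    Rstarop i hi ∘ₗ Rstarop j hj = Rstarop j hj ∘ₗ (Rstarop (n := n) i hi) := by
  have hfar' : j + 1 < i ∨ i + 1 < j := hfar.symm
  apply (basisMonomials (Fin n) F).ext
  intro d
  simp only [coe_basisMonomials, LinearMap.comp_apply]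
  rcases le_or_gt (d ⟨i + 1, hi⟩) (d ⟨i, by omega⟩) with h1 | h1 <;>
    rcases le_or_gt (d ⟨j + 1, hj⟩) (d ⟨j, by omega⟩) with h2 | h2
  · rw [Rop_le hj d h2, Rop_le hi d h1,
      Rop_le hi _ (by rw [far_fst hi hj hfar, far_snd hi hj hfar]; exact h1),
      Rop_le hj _ (by rw [far_fst hj hi hfar', far_snd hj hi hfar']; exact h2),
      swapIdx_comm hi hj hfar]
  · rw [Rop_lt hj d h2, Rop_le hi d h1, map_add, map_smul, map_smul, Rop_le hi d h1,
      Rop_le hi _ (by rw [far_fst hi hj hfar, far_snd hi hj hfar]; exact h1),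
      Rop_lt hj _ (by rw [far_fst hj hi hfar', far_snd hj hi hfar']; exact h2),
      swapIdx_comm hi hj hfar]
  · rw [Rop_le hj d h2, Rop_lt hi d h1, map_add, map_smul, map_smul, Rop_le hj d h2,
      Rop_lt hi _ (by rw [far_fst hi hj hfar, far_snd hi hj hfar]; exact h1),
      Rop_le hj _ (by rw [far_fst hj hi hfar', far_snd hj hi hfar']; exact h2),
      swapIdx_comm hi hj hfar]
  · rw [Rop_lt hj d h2, Rop_lt hi d h1, map_add, map_smul, map_smul,
      map_add, map_smul, map_smul, Rop_lt hi d h1, Rop_lt hj d h2,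
      Rop_lt hi _ (by rw [far_fst hi hj hfar, far_snd hi hj hfar]; exact h1),
      Rop_lt hj _ (by rw [far_fst hj hi hfar', far_snd hj hi hfar']; exact h2),
      swapIdx_comm hi hj hfar]
    simp only [smul_add, smul_smul]
    ring_nf

section BraidLemmas

variable {n i : ℕ}

lemma E1a (h1 : i + 1 < n) (e : Fin n →₀ ℕ) :
    swapIdx n i h1 e ⟨i, by omega⟩ = e ⟨i + 1, h1⟩ := swap_fst h1 e

lemma E1b (h1 : i + 1 < n) (e : Fin n →₀ ℕ) :
    swapIdx n i h1 e ⟨i + 1, h1⟩ = e ⟨i, by omega⟩ := swap_snd h1 e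

lemma E1c (h1 : i + 1 < n) (h2 : i + 1 + 1 < n) (e : Fin n →₀ ℕ) :
    swapIdx n i h1 e ⟨i + 1 + 1, h2⟩ = e ⟨i + 1 + 1, h2⟩ :=
  swapIdx_apply_other h1 e _ (show i + 1 + 1 ≠ i by omega) (show i + 1 + 1 ≠ i + 1 by omega)

lemma E2a (h2 : i + 1 + 1 < n) (e : Fin n →₀ ℕ) :
    swapIdx n (i + 1) h2 e ⟨i, by omega⟩ = e ⟨i, by omega⟩ :=
  swapIdx_apply_other h2 e _ (show i ≠ i + 1 by omega) (show i ≠ i + 1 + 1 by omega)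

lemma E2b (h2 : i + 1 + 1 < n) (e : Fin n →₀ ℕ) :
    swapIdx n (i + 1) h2 e ⟨i + 1, by omega⟩ = e ⟨i + 1 + 1, h2⟩ := swap_fst h2 e

lemma E2c (h2 : i + 1 + 1 < n) (e : Fin n →₀ ℕ) :
    swapIdx n (i + 1) h2 e ⟨i + 1 + 1, h2⟩ = e ⟨i + 1, by omega⟩ := swap_snd h2 e

end BraidLemmas

set_option maxRecDepth 10000 in
set_option maxHeartbeats 4000000 in
theorem braidrel {n : ℕ} (i : ℕ) (h1 : i + 1 < n) (h2 : i + 1 + 1 < n) :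
    Rstarop i h1 ∘ₗ (Rstarop (i + 1) h2 ∘ₗ Rstarop i h1)
      = Rstarop (i + 1) h2 ∘ₗ (Rstarop i h1 ∘ₗ (Rstarop (n := n) (i + 1) h2)) := by
  apply (basisMonomials (Fin n) F).ext
  intro d
  have hi0 : i < n := by omega
  obtain ⟨A, hA⟩ : ∃ v, v = d ⟨i, hi0⟩ := ⟨_, rfl⟩
  obtain ⟨B, hB⟩ : ∃ v, v = d ⟨i + 1, h1⟩ := ⟨_, rfl⟩
  obtain ⟨C, hC⟩ : ∃ v, v = d ⟨i + 1 + 1, h2⟩ := ⟨_, rfl⟩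
  have nA : ∀ pf : i < n, d ⟨i, pf⟩ = A := fun _ => hA.symm
  have nB : ∀ pf : i + 1 < n, d ⟨i + 1, pf⟩ = B := fun _ => hB.symm
  have nC : ∀ pf : i + 1 + 1 < n, d ⟨i + 1 + 1, pf⟩ = C := fun _ => hC.symm
  simp only [coe_basisMonomials, LinearMap.comp_apply]
  simp only [Rstarop_monomial, Rstarval, E1a, E1b, E1c, E2a, E2b, E2c, swapIdx_swapIdx,
    nA, nB, nC]
  split_ifs
  all_goals
    first
      | (exfalso; omega)
      | (try simp only [map_add, map_smul, Rstarop_monomial, Rstarval, E1a, E1b, E1c, E2a, E2b,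
          E2c, swapIdx_swapIdx, nA, nB, nC]
         try split_ifs)
  all_goals
    first
      | (exfalso; omega)
      | (try simp only [map_add, map_smul, Rstarop_monomial, Rstarval, E1a, E1b, E1c, E2a, E2b,
          E2c, swapIdx_swapIdx, nA, nB, nC]
         try split_ifs)
  all_goals
    first
      | (exfalso; omega)
      | (try simp only [map_add, map_smul, Rstarop_monomial, Rstarval, E1a, E1b, E1c, E2a, E2b,
          E2c, swapIdx_swapIdx, nA, nB, nC]
         try split_ifs)
  all_goals
    first
      | (exfalso; omega)
      | (try rw [swapIdx_eq_self h1 d (by rw [nA, nB]; omega)]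
         try rw [swapIdx_eq_self h2 d (by rw [nB, nC]; omega)]
         try rw [swapIdx_eq_self h1 (swapIdx n (i + 1) h2 d)
           (by rw [E2a, E2b, nA, nC]; omega)]
         try rw [swapIdx_eq_self h2 (swapIdx n i h1 d)
           (by rw [E1b, E1c, nA, nC]; omega)]
         try rw [swapIdx_eq_self h1 (swapIdx n (i + 1) h2 (swapIdx n i h1 d))
           (by simp only [E2a, E2b, E1a, E1c, nB, nC]; omega)]
         try rw [swapIdx_eq_self h2 (swapIdx n i h1 (swapIdx n (i + 1) h2 d))
           (by simp only [E1b, E1c, E2a, E2c, nA, nB]; omega)]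
         try simp only [← swapIdx_braid h1 h2 d]
         try rw [swapIdx_eq_self h1 d (by rw [nA, nB]; omega)]
         try rw [swapIdx_eq_self h2 d (by rw [nB, nC]; omega)]
         try rw [swapIdx_eq_self h1 (swapIdx n (i + 1) h2 d)
           (by rw [E2a, E2b, nA, nC]; omega)]
         try rw [swapIdx_eq_self h2 (swapIdx n i h1 d)
           (by rw [E1b, E1c, nA, nC]; omega)]
         try rw [swapIdx_eq_self h1 (swapIdx n (i + 1) h2 (swapIdx n i h1 d))
           (by simp only [E2a, E2b, E1a, E1c, nB, nC]; omega)]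
         try rw [swapIdx_eq_self h2 (swapIdx n i h1 (swapIdx n (i + 1) h2 d))
           (by simp only [E1b, E1c, E2a, E2c, nA, nB]; omega)]
         try simp only [swapIdx_swapIdx]
         try generalize (monomial (swapIdx n i h1 (swapIdx n (i + 1) h2 (swapIdx n i h1 d)))
           (1 : F) : Pn n) = m121
         try generalize (monomial (swapIdx n i h1 (swapIdx n (i + 1) h2 d)) (1 : F) : Pn n) = m12
         try generalize (monomial (swapIdx n (i + 1) h2 (swapIdx n i h1 d)) (1 : F) : Pn n) = m21
         try generalize (monomial (swapIdx n i h1 d) (1 : F) : Pn n) = m1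
         try generalize (monomial (swapIdx n (i + 1) h2 d) (1 : F) : Pn n) = m2
         try generalize (monomial d (1 : F) : Pn n) = m0
         try simp only [smul_eq_C_mul, map_sub, map_one]
         try ring)

/-- the operators `R*_i` satisfy the Hecke algebra relations. -/
theorem stmt6 (n : ℕ) (hn : 2 ≤ n) :
    HeckeRels (fun i h => (Rstarop i h : Pn n →ₗ[F] Pn n)) :=
  ⟨fun i h => braidrel i (by omega) (by omega),
   fun i j hi hj hf => commrel i j hi hj hf,
   fun i h => quad i h⟩

end
end

section
/- Let 1 ≤ i ≤ n−1 and let f ∈ P_n be a polynomial all of whose coefficients are integers (i.e. f ∈ ℤ[x_1,…,x_n]). Then there exists an i-symmetric polynomial g ∈ ℤ[x_1,…,x_n] such that (A_i − R_i)(f) = (1−q)·g; in particular (A_i − R_i)(f) is i-symmetric and divisible by 1−q. -/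
open MvPolynomial

noncomputable section

namespace Stmt12

/-- Exponent vector with exponents at `x`, `y` replaced by `j`, `d x + d y - j`. -/
def eab {n : ℕ} (x y : Fin n) (d : Fin n →₀ ℕ) (j : ℕ) : Fin n →₀ ℕ :=
  Finsupp.update (Finsupp.update d x j) y (d x + d y - j)

/-- Value of the symmetrizing operator on a monomial. -/
def gmon {n : ℕ} (x y : Fin n) (d : Fin n →₀ ℕ) : Pn n :=
  if d y < d x then ∑ j ∈ Finset.Icc (d y) (d x), monomial (eab x y d j) (1 : F)
  else if d x < d y then -∑ j ∈ Finset.Icc (d x) (d y), monomial (eab x y d j) (1 : F)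
  else 0

/-- Linear extension of `gmon`. -/
def Gop {n : ℕ} (x y : Fin n) : Pn n →ₗ[F] Pn n :=
  (basisMonomials (Fin n) F).constr F (gmon x y)

variable {n : ℕ} {x y : Fin n} (hxy : x ≠ y)

include hxy in
lemma eab_apply_x (d : Fin n →₀ ℕ) (j : ℕ) : eab x y d j x = j := by
  simp [eab, Finsupp.coe_update, Function.update_apply, hxy, hxy.symm]

lemma eab_apply_y (d : Fin n →₀ ℕ) (j : ℕ) : eab x y d j y = d x + d y - j := by
  simp [eab, Finsupp.coe_update, Function.update_apply]

lemma eab_apply_other (d : Fin n →₀ ℕ) (j : ℕ) {k : Fin n} (hk : k ≠ x) (hk' : k ≠ y) :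
    eab x y d j k = d k := by
  simp [eab, Finsupp.coe_update, Function.update_apply, hk, hk']

include hxy in
lemma eab_self (d : Fin n →₀ ℕ) : eab x y d (d x) = d := by
  ext k
  rcases eq_or_ne k x with rfl | hk
  · rw [eab_apply_x hxy]
  rcases eq_or_ne k y with rfl | hk'
  · rw [eab_apply_y]; omega
  · rw [eab_apply_other _ _ hk hk']

include hxy in
lemma swap_eab (d : Fin n →₀ ℕ) :
    Finsupp.equivMapDomain (Equiv.swap x y) d = eab x y d (d y) := by
  ext k
  rw [Finsupp.equivMapDomain_apply, Equiv.symm_swap]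
  rcases eq_or_ne k x with rfl | hk
  · rw [eab_apply_x hxy, Equiv.swap_apply_left]
  rcases eq_or_ne k y with rfl | hk'
  · rw [eab_apply_y, Equiv.swap_apply_right]; omega
  · rw [eab_apply_other _ _ hk hk', Equiv.swap_apply_of_ne_of_ne hk hk']

include hxy in
lemma swap_eab_j (d : Fin n →₀ ℕ) {j : ℕ} (hj : j ≤ d x + d y) :
    Finsupp.equivMapDomain (Equiv.swap x y) (eab x y d j) = eab x y d (d x + d y - j) := by
  ext k
  rw [Finsupp.equivMapDomain_apply, Equiv.symm_swap]
  rcases eq_or_ne k x with rfl | hk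
  · rw [eab_apply_x hxy, Equiv.swap_apply_left, eab_apply_y]
  rcases eq_or_ne k y with rfl | hk'
  · rw [eab_apply_y, Equiv.swap_apply_right, eab_apply_x hxy]; omega
  · rw [eab_apply_other _ _ hk hk', Equiv.swap_apply_of_ne_of_ne hk hk',
      eab_apply_other _ _ hk hk']

lemma Gop_monomial (d : Fin n →₀ ℕ) : Gop x y (monomial d (1 : F)) = gmon x y d := by
  have := (basisMonomials (Fin n) F).constr_basis F (gmon x y) d
  rwa [coe_basisMonomials] at this

lemma X_mul_mono (z : Fin n) (e : Fin n →₀ ℕ) (c : F) :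
    (X z : Pn n) * monomial e c = monomial (Finsupp.single z 1 + e) c := by
  rw [X, monomial_mul, one_mul]

include hxy in
lemma telescope (d : Fin n →₀ ℕ) (l : ℕ) :
    ∀ u, l ≤ u → u ≤ d x + d y →
    ((X x : Pn n) - X y) * ∑ j ∈ Finset.Icc l u, monomial (eab x y d j) (1 : F)
      = (X x : Pn n) * monomial (eab x y d u) (1 : F)
        - (X y : Pn n) * monomial (eab x y d l) (1 : F) := by
  intro u hlu
  induction u, hlu using Nat.le_induction with
  | base =>
    intro _
    rw [Finset.Icc_self, Finset.sum_singleton, sub_mul]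
  | succ u hu ih =>
    intro hub
    have hkey : (X y : Pn n) * monomial (eab x y d (u + 1)) (1 : F)
        = (X x : Pn n) * monomial (eab x y d u) (1 : F) := by
      rw [X_mul_mono, X_mul_mono]
      have hexp : Finsupp.single y 1 + eab x y d (u + 1)
          = Finsupp.single x 1 + eab x y d u := by
        ext k
        rcases eq_or_ne k x with rfl | hk
        · simp [eab_apply_x hxy, Finsupp.single_apply, hxy, hxy.symm]; omega
        rcases eq_or_ne k y with rfl | hk'
        · simp [Finsupp.single_apply, eab_apply_y, hxy]; omega
        · simp [eab_apply_other _ _ hk hk', Finsupp.single_apply, hk.symm, hk'.symm]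
      rw [hexp]
    rw [show Finset.Icc l (u + 1) = insert (u + 1) (Finset.Icc l u) from
        (Finset.insert_Icc_right_eq_Icc_add_one (by omega)).symm,
      Finset.sum_insert (by simp), mul_add, ih (by omega), sub_mul, hkey]
    ring

include hxy in
lemma rename_gmon (d : Fin n →₀ ℕ) :
    rename (⇑(Equiv.swap x y)) (gmon x y d) = gmon x y d := by
  have hsum : ∀ l u : ℕ, l + u = d x + d y →
      rename (⇑(Equiv.swap x y)) (∑ j ∈ Finset.Icc l u, monomial (eab x y d j) (1 : F))
        = ∑ j ∈ Finset.Icc l u, monomial (eab x y d j) (1 : F) := by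
    intro l u hlu
    rw [map_sum]
    have step : ∀ j ∈ Finset.Icc l u,
        rename (⇑(Equiv.swap x y)) (monomial (eab x y d j) (1 : F))
          = monomial (eab x y d (d x + d y - j)) (1 : F) := by
      intro j hj
      simp only [Finset.mem_Icc] at hj
      rw [rename_monomial, ← Finsupp.equivMapDomain_eq_mapDomain,
        swap_eab_j hxy d (by omega)]
    rw [Finset.sum_congr rfl step]
    refine Finset.sum_nbij' (fun j => d x + d y - j) (fun j => d x + d y - j)
      ?_ ?_ ?_ ?_ ?_
    · intro a ha; simp only [Finset.mem_Icc] at *; omega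
    · intro a ha; simp only [Finset.mem_Icc] at *; omega
    · intro a ha; simp only [Finset.mem_Icc] at ha; omega
    · intro a ha; simp only [Finset.mem_Icc] at ha; omega
    · intro a ha; rfl
  unfold gmon
  split_ifs with h1 h2
  · exact hsum _ _ (by omega)
  · rw [map_neg, hsum _ _ (by omega)]
  · rw [map_zero]

include hxy in
lemma rename_Gop (f : Pn n) :
    rename (⇑(Equiv.swap x y)) (Gop x y f) = Gop x y f := by
  have hmaps : (rename (⇑(Equiv.swap x y)) : Pn n →ₐ[F] Pn n).toLinearMap ∘ₗ Gop x y
      = Gop x y := by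
    apply (basisMonomials (Fin n) F).ext
    intro d
    have hb : (basisMonomials (Fin n) F) d = monomial d (1 : F) := by
      rw [coe_basisMonomials]
    rw [LinearMap.comp_apply, hb, Gop_monomial, AlgHom.toLinearMap_apply,
      rename_gmon hxy]
  exact LinearMap.congr_fun hmaps f

lemma int_sum {α : Type*} {s : Finset α} {p : α → F}
    (hp : ∀ a ∈ s, ∃ z : ℤ, p a = (z : F)) : ∃ z : ℤ, ∑ a ∈ s, p a = (z : F) := by
  classical
  induction s using Finset.induction_on with
  | empty => exact ⟨0, by simp⟩
  | insert _ _ hmem ih =>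
    obtain ⟨z1, hz1⟩ := hp _ (Finset.mem_insert_self _ _)
    obtain ⟨z2, hz2⟩ := ih fun a ha => hp a (Finset.mem_insert_of_mem ha)
    exact ⟨z1 + z2, by rw [Finset.sum_insert hmem, hz1, hz2]; push_cast; ring⟩

lemma isInt_gmon (d e : Fin n →₀ ℕ) : ∃ z : ℤ, coeff e (gmon x y d) = (z : F) := by
  unfold gmon
  split_ifs with h1 h2
  · rw [coeff_sum]
    exact int_sum fun j hj => ⟨if eab x y d j = e then 1 else 0, by
      rw [coeff_monomial]; split <;> simp⟩
  · rw [coeff_neg, coeff_sum]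
    obtain ⟨z, hz⟩ := int_sum (s := Finset.Icc (d x) (d y))
      (p := fun j => coeff e (monomial (eab x y d j) (1 : F)))
      fun j hj => ⟨if eab x y d j = e then 1 else 0, by
        simp only [coeff_monomial]; split <;> simp⟩
    exact ⟨-z, by rw [hz]; push_cast; ring⟩
  · exact ⟨0, by simp⟩

lemma isInt_Gop (f : Pn n) (hf : IsIntPoly f) : IsIntPoly (Gop x y f) := by
  intro e
  have hrep : Gop x y f = ∑ d ∈ f.support, coeff d f • gmon x y d := by
    conv_lhs => rw [f.as_sum]
    rw [map_sum]
    refine Finset.sum_congr rfl fun d _ => ?_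
    rw [show (monomial d) (coeff d f) = coeff d f • monomial d (1 : F) by
      rw [smul_monomial, smul_eq_mul, mul_one], map_smul, Gop_monomial]
  rw [hrep, coeff_sum]
  refine int_sum fun a _ => ?_
  obtain ⟨z1, hz1⟩ := hf a
  obtain ⟨z2, hz2⟩ := isInt_gmon (x := x) (y := y) a e
  exact ⟨z1 * z2, by rw [coeff_smul, smul_eq_mul, hz1, hz2]; push_cast; ring⟩

lemma key (dd : DDFam n) (hdd : IsDD dd) (i : ℕ) (h : i + 1 < n) (f : Pn n) :
    (X (⟨i, by omega⟩ : Fin n) - X ⟨i + 1, h⟩) * ((Aop dd i h - Rop i h) f)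
      = (1 - q) • ((X (⟨i, by omega⟩ : Fin n) - X ⟨i + 1, h⟩) *
          Gop (⟨i, by omega⟩ : Fin n) ⟨i + 1, h⟩ f) := by
  set x : Fin n := ⟨i, by omega⟩ with hxdef
  set y : Fin n := ⟨i + 1, h⟩ with hydef
  have hxy : x ≠ y := by simp [hxdef, hydef, Fin.ext_iff]
  suffices hmaps : (LinearMap.mulLeft F ((X x : Pn n) - X y)) ∘ₗ (Aop dd i h - Rop i h)
      = (1 - q) • ((LinearMap.mulLeft F ((X x : Pn n) - X y)) ∘ₗ Gop x y) by
    have := LinearMap.congr_fun hmaps f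
    simpa only [LinearMap.comp_apply, LinearMap.smul_apply, LinearMap.mulLeft_apply]
      using this
  apply (basisMonomials (Fin n) F).ext
  intro d
  have hb : (basisMonomials (Fin n) F) d = monomial d (1 : F) := by
    rw [coe_basisMonomials]
  have hRop : Rop i h (monomial d (1 : F)) = Rval i h d := by
    have := (basisMonomials (Fin n) F).constr_basis F (Rval i h) d
    rwa [coe_basisMonomials] at this
  have hswap_coe : ⇑(transp n i h) = ⇑(Equiv.swap x y) := rfl
  have hswapIdx : swapIdx n i h d = eab x y d (d y) := by
    rw [show swapIdx n i h d = Finsupp.equivMapDomain (Equiv.swap x y) d from rfl,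
      swap_eab hxy]
  have hrenM : rename (⇑(transp n i h)) (monomial d (1 : F))
      = monomial (eab x y d (d y)) (1 : F) := by
    rw [hswap_coe, rename_monomial, ← Finsupp.equivMapDomain_eq_mapDomain, swap_eab hxy]
  have hrenX : rename (⇑(transp n i h)) ((X x : Pn n) * monomial d (1 : F))
      = (X y : Pn n) * monomial (eab x y d (d y)) (1 : F) := by
    rw [map_mul, hrenM, hswap_coe, rename_X, Equiv.swap_apply_left]
  have hdd1 := hdd i h ((X x : Pn n) * monomial d (1 : F))
  have hdd2 := hdd i h (monomial d (1 : F))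
  rw [hrenX] at hdd1
  rw [hrenM] at hdd2
  simp only [LinearMap.comp_apply, LinearMap.smul_apply, LinearMap.sub_apply,
    LinearMap.mulLeft_apply, hb, Aop, Xop, Gop_monomial, hRop]
  rw [mul_sub, mul_sub, hdd1, mul_smul_comm, mul_left_comm, hdd2]
  rcases lt_trichotomy (d y) (d x) with hlt | heq | hgt
  · have hRv : Rval i h d = q • monomial (eab x y d (d y)) (1 : F) := by
      unfold Rval
      rw [if_pos hlt, hswapIdx]
    have hg : gmon x y d
        = ∑ j ∈ Finset.Icc (d y) (d x), monomial (eab x y d j) (1 : F) := by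
      unfold gmon; rw [if_pos hlt]
    have hM : (monomial d (1 : F) : Pn n) = monomial (eab x y d (d x)) (1 : F) := by
      rw [eab_self hxy]
    have htel := telescope hxy d (d y) (d x) hlt.le (by omega)
    rw [hRv, hg, hM, htel]
    simp only [smul_eq_C_mul, map_sub, map_one]
    ring
  · have hRv : Rval i h d = monomial d (1 : F) := by
      unfold Rval
      rw [if_neg (show ¬ d y < d x by omega), if_neg (show ¬ d x < d y by omega)]
    have hg : gmon x y d = 0 := by
      unfold gmon
      rw [if_neg (show ¬ d y < d x by omega), if_neg (show ¬ d x < d y by omega)]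
    have hMb : (monomial (eab x y d (d y)) (1 : F) : Pn n) = monomial d (1 : F) := by
      rw [heq, eab_self hxy]
    rw [hRv, hg, hMb]
    simp only [smul_eq_C_mul, map_sub, map_one, mul_zero]
    ring
  · have hRv : Rval i h d = (1 - q) • monomial d (1 : F)
        + monomial (eab x y d (d y)) (1 : F) := by
      unfold Rval
      rw [if_neg (show ¬ d y < d x by omega), if_pos hgt, hswapIdx]
    have hg : gmon x y d
        = -∑ j ∈ Finset.Icc (d x) (d y), monomial (eab x y d j) (1 : F) := by
      unfold gmon
      rw [if_neg (show ¬ d y < d x by omega), if_pos hgt]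
    have hM : (monomial d (1 : F) : Pn n) = monomial (eab x y d (d x)) (1 : F) := by
      rw [eab_self hxy]
    have htel := telescope hxy d (d x) (d y) hgt.le (by omega)
    rw [hRv, hg, hM, mul_neg, htel]
    simp only [smul_eq_C_mul, map_sub, map_one]
    ring

end Stmt12

/-- for `f` with integer coefficients, `(A_i - R_i) f` is
`i`-symmetric and divisible by `1 - q` within `ℤ[x_1, …, x_n]`. -/
theorem stmt12 (n : ℕ) (hn : 2 ≤ n) (dd : DDFam n) (hdd : IsDD dd)
    (i : ℕ) (h : i + 1 < n) (f : Pn n) (hf : IsIntPoly f) :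
    ∃ g : Pn n, IsIntPoly g ∧ rename (⇑(transp n i h)) g = g ∧
      (Aop dd i h - Rop i h) f = (1 - q) • g := by
  have hxy : (⟨i, by omega⟩ : Fin n) ≠ (⟨i + 1, h⟩ : Fin n) := by simp [Fin.ext_iff]
  refine ⟨Stmt12.Gop ⟨i, by omega⟩ ⟨i + 1, h⟩ f, Stmt12.isInt_Gop f hf, ?_, ?_⟩
  · exact Stmt12.rename_Gop hxy f
  · have hne : ((X (⟨i, by omega⟩ : Fin n) : Pn n) - X ⟨i + 1, h⟩) ≠ 0 :=
      sub_ne_zero.mpr fun e => hxy (X_injective e)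
    refine mul_left_cancel₀ hne ?_
    rw [mul_smul_comm]
    exact Stmt12.key dd hdd i h f

end
end

section
/- The operators B_1,…,B_{n−1}, where B_i := −(∂_i∘X_{i+1} − q·X_{i+1}∘∂_i), satisfy the Hecke algebra relations: B_i∘B_{i+1}∘B_i = B_{i+1}∘B_i∘B_{i+1} for all 1 ≤ i ≤ n−2; B_i∘B_j = B_j∘B_i whenever |i−j| > 1; and B_i∘B_i = (1−q)·B_i + q·id for all 1 ≤ i ≤ n−1. -/
open MvPolynomial

noncomputable section

set_option maxHeartbeats 3200000

lemma Xsub_ne_s17 {n : ℕ} {a b : Fin n} (hab : a ≠ b) : (X a - X b : Pn n) ≠ 0 :=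
  sub_ne_zero.mpr fun hXeq => hab (MvPolynomial.X_injective hXeq)

lemma dd_inv {n : ℕ} (dd : DDFam n) (hdd : IsDD dd) (i : ℕ) (h : i + 1 < n) (f : Pn n) :
    rename (⇑(transp n i h)) (dd i h f) = dd i h f := by
  have hne : ((⟨i, by omega⟩ : Fin n)) ≠ ⟨i + 1, h⟩ := by
    simp only [ne_eq, Fin.mk.injEq]; omega
  have e := hdd i h f
  have e2 := congrArg (rename (⇑(transp n i h))) e
  rw [map_mul, map_sub, map_sub, rename_X, rename_X, rename_rename,
    show (⇑(transp n i h) ∘ ⇑(transp n i h)) = id from funext fun x => Equiv.swap_apply_self _ _ _,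
    rename_id, AlgHom.id_apply,
    show (transp n i h) ⟨i, by omega⟩ = ⟨i + 1, h⟩ from Equiv.swap_apply_left _ _,
    show (transp n i h) ⟨i + 1, h⟩ = ⟨i, by omega⟩ from Equiv.swap_apply_right _ _] at e2
  exact mul_left_cancel₀ (Xsub_ne_s17 hne) (by linear_combination - e2 - e)

lemma Bop_apply {n : ℕ} (dd : DDFam n) (hdd : IsDD dd) (i : ℕ) (h : i + 1 < n) (g : Pn n) :
    Bop dd i h g = g - (X ⟨i, by omega⟩ - C q * X ⟨i + 1, h⟩) * dd i h g := by
  have hne : ((⟨i, by omega⟩ : Fin n)) ≠ ⟨i + 1, h⟩ := by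
    simp only [ne_eq, Fin.mk.injEq]; omega
  have e1 := hdd i h (X ⟨i + 1, h⟩ * g)
  have e2 := hdd i h g
  rw [show (rename (⇑(transp n i h))) (X ⟨i + 1, h⟩ * g)
        = X (⟨i, by omega⟩ : Fin n) * rename (⇑(transp n i h)) g from by
      rw [map_mul, rename_X,
        show (transp n i h) ⟨i + 1, h⟩ = ⟨i, by omega⟩ from Equiv.swap_apply_right _ _]] at e1
  have key : dd i h (X ⟨i + 1, h⟩ * g) = X (⟨i, by omega⟩ : Fin n) * dd i h g - g :=
    mul_left_cancel₀ (Xsub_ne_s17 hne) (by linear_combination e1 - X (⟨i, by omega⟩ : Fin n) * e2)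
  simp only [Bop, LinearMap.neg_apply, LinearMap.sub_apply, LinearMap.coe_comp,
    Function.comp_apply, LinearMap.smul_apply, Xop, LinearMap.mulLeft_apply, key,
    smul_eq_C_mul]
  ring

lemma quad_aux (n : ℕ) (dd : DDFam n) (hdd : IsDD dd) (i : ℕ) (h : i + 1 < n) :
    Bop dd i h ∘ₗ Bop dd i h = (1 - q) • Bop dd i h + q • LinearMap.id := by
  have hne : ((⟨i, by omega⟩ : Fin n)) ≠ ⟨i + 1, h⟩ := by
    simp only [ne_eq, Fin.mk.injEq]; omega
  have hsA : ∀ (p : i < n), transp n i h ⟨i, p⟩ = ⟨i + 1, h⟩ := by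
    intro p; unfold transp; exact Equiv.swap_apply_left _ _
  have hsB : ∀ (p : i + 1 < n), transp n i h ⟨i + 1, p⟩ = ⟨i, by omega⟩ := by
    intro p; unfold transp; exact Equiv.swap_apply_right _ _
  refine LinearMap.ext fun f => ?_
  simp only [LinearMap.coe_comp, Function.comp_apply, LinearMap.add_apply,
    LinearMap.smul_apply, LinearMap.id_apply, Bop_apply dd hdd, smul_eq_C_mul, map_sub, map_one]
  have e1 := hdd i h f
  have e2 := hdd i h (f - (X ⟨i, by omega⟩ - C q * X ⟨i + 1, h⟩) * dd i h f)
  simp only [map_sub, map_mul, rename_X, rename_C, hsA, hsB, dd_inv dd hdd] at e1 e2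
  refine mul_left_cancel₀ (Xsub_ne_s17 hne) ?_
  linear_combination (C q * X (⟨i + 1, h⟩ : Fin n) - X (⟨i, by omega⟩ : Fin n)) * e2
    + (X (⟨i, by omega⟩ : Fin n) - C q * X (⟨i + 1, h⟩ : Fin n)) * e1

lemma comm_aux (n : ℕ) (dd : DDFam n) (hdd : IsDD dd) (i j : ℕ) (hi : i + 1 < n) (hj : j + 1 < n)
    (hij : i + 1 < j) : Bop dd i hi ∘ₗ Bop dd j hj = Bop dd j hj ∘ₗ Bop dd i hi := by
  have hneI : ((⟨i, by omega⟩ : Fin n)) ≠ ⟨i + 1, hi⟩ := by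
    simp only [ne_eq, Fin.mk.injEq]; omega
  have hneJ : ((⟨j, by omega⟩ : Fin n)) ≠ ⟨j + 1, hj⟩ := by
    simp only [ne_eq, Fin.mk.injEq]; omega
  have hsA : ∀ (p : i < n), transp n i hi ⟨i, p⟩ = ⟨i + 1, hi⟩ := by
    intro p; unfold transp; exact Equiv.swap_apply_left _ _
  have hsB : ∀ (p : i + 1 < n), transp n i hi ⟨i + 1, p⟩ = ⟨i, by omega⟩ := by
    intro p; unfold transp; exact Equiv.swap_apply_right _ _
  have htC : ∀ (p : j < n), transp n j hj ⟨j, p⟩ = ⟨j + 1, hj⟩ := by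
    intro p; unfold transp; exact Equiv.swap_apply_left _ _
  have htD : ∀ (p : j + 1 < n), transp n j hj ⟨j + 1, p⟩ = ⟨j, by omega⟩ := by
    intro p; unfold transp; exact Equiv.swap_apply_right _ _
  have hsC : ∀ (p : j < n), transp n i hi ⟨j, p⟩ = ⟨j, p⟩ := by
    intro p; unfold transp
    exact Equiv.swap_apply_of_ne_of_ne (by simp only [ne_eq, Fin.mk.injEq]; omega)
      (by simp only [ne_eq, Fin.mk.injEq]; omega)
  have hsD : ∀ (p : j + 1 < n), transp n i hi ⟨j + 1, p⟩ = ⟨j + 1, p⟩ := by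
    intro p; unfold transp
    exact Equiv.swap_apply_of_ne_of_ne (by simp only [ne_eq, Fin.mk.injEq]; omega)
      (by simp only [ne_eq, Fin.mk.injEq]; omega)
  have htA : ∀ (p : i < n), transp n j hj ⟨i, p⟩ = ⟨i, p⟩ := by
    intro p; unfold transp
    exact Equiv.swap_apply_of_ne_of_ne (by simp only [ne_eq, Fin.mk.injEq]; omega)
      (by simp only [ne_eq, Fin.mk.injEq]; omega)
  have htB : ∀ (p : i + 1 < n), transp n j hj ⟨i + 1, p⟩ = ⟨i + 1, p⟩ := by
    intro p; unfold transp
    exact Equiv.swap_apply_of_ne_of_ne (by simp only [ne_eq, Fin.mk.injEq]; omega)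
      (by simp only [ne_eq, Fin.mk.injEq]; omega)
  have hdisj : (transp n i hi).Disjoint (transp n j hj) := by
    intro x
    by_cases h1 : (x : ℕ) = j ∨ (x : ℕ) = j + 1
    · left; unfold transp
      exact Equiv.swap_apply_of_ne_of_ne (by simp only [ne_eq, Fin.ext_iff]; omega)
        (by simp only [ne_eq, Fin.ext_iff]; omega)
    · right; push_neg at h1; unfold transp
      exact Equiv.swap_apply_of_ne_of_ne (by simp only [ne_eq, Fin.ext_iff]; omega)
        (by simp only [ne_eq, Fin.ext_iff]; omega)
  refine LinearMap.ext fun f => ?_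
  have hcommf : rename (⇑(transp n j hj)) (rename (⇑(transp n i hi)) f)
      = rename (⇑(transp n i hi)) (rename (⇑(transp n j hj)) f) := by
    rw [rename_rename, rename_rename, ← Equiv.Perm.coe_mul, ← Equiv.Perm.coe_mul,
      hdisj.commute.eq]
  simp only [LinearMap.coe_comp, Function.comp_apply, Bop_apply dd hdd]
  have eg := hdd j hj f
  have eg' := hdd i hi f
  have e2 := hdd i hi (f - (X ⟨j, by omega⟩ - C q * X ⟨j + 1, hj⟩) * dd j hj f)
  have e2' := hdd j hj (f - (X ⟨i, by omega⟩ - C q * X ⟨i + 1, hi⟩) * dd i hi f)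
  have em := congrArg (rename (⇑(transp n i hi))) eg
  have em' := congrArg (rename (⇑(transp n j hj))) eg'
  simp only [map_sub, map_mul, rename_X, rename_C, hsA, hsB, hsC, hsD, htA, htB, htC, htD,
    dd_inv dd hdd, hcommf] at eg eg' e2 e2' em em' ⊢
  refine mul_left_cancel₀ (mul_ne_zero (Xsub_ne_s17 hneI) (Xsub_ne_s17 hneJ)) ?_
  linear_combination (C q * X (⟨i + 1, hi⟩ : Fin n) - X (⟨i, by omega⟩ : Fin n))
        * (X (⟨j, by omega⟩ : Fin n) - X (⟨j + 1, hj⟩ : Fin n)) * e2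
    + (X (⟨i, by omega⟩ : Fin n) - X (⟨i + 1, hi⟩ : Fin n))
        * (X (⟨j, by omega⟩ : Fin n) - C q * X (⟨j + 1, hj⟩ : Fin n)) * e2'
    + (C q * X (⟨i + 1, hi⟩ : Fin n) - X (⟨i, by omega⟩ : Fin n))
        * (X (⟨j, by omega⟩ : Fin n) - C q * X (⟨j + 1, hj⟩ : Fin n)) * em
    + (X (⟨i, by omega⟩ : Fin n) - C q * X (⟨i + 1, hi⟩ : Fin n))
        * (X (⟨j, by omega⟩ : Fin n) - C q * X (⟨j + 1, hj⟩ : Fin n)) * em'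
    + (1 - C q) * X (⟨i + 1, hi⟩ : Fin n)
        * (X (⟨j, by omega⟩ : Fin n) - C q * X (⟨j + 1, hj⟩ : Fin n)) * eg
    - (1 - C q) * X (⟨j + 1, hj⟩ : Fin n)
        * (X (⟨i, by omega⟩ : Fin n) - C q * X (⟨i + 1, hi⟩ : Fin n)) * eg'

lemma braid_aux (n : ℕ) (dd : DDFam n) (hdd : IsDD dd) (i : ℕ) (h : i + 2 < n) (h1 : i + 1 < n) :
    Bop dd i h1 ∘ₗ (Bop dd (i + 1) h ∘ₗ Bop dd i h1)
      = Bop dd (i + 1) h ∘ₗ (Bop dd i h1 ∘ₗ Bop dd (i + 1) h) := by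
  have hneAB : ((⟨i, by omega⟩ : Fin n)) ≠ ⟨i + 1, h1⟩ := by
    simp only [ne_eq, Fin.mk.injEq]; omega
  have hneBC : ((⟨i + 1, by omega⟩ : Fin n)) ≠ ⟨i + 1 + 1, h⟩ := by
    simp only [ne_eq, Fin.mk.injEq]; omega
  have hneAC : ((⟨i, by omega⟩ : Fin n)) ≠ ⟨i + 1 + 1, h⟩ := by
    simp only [ne_eq, Fin.mk.injEq]; omega
  have hsA : ∀ (p : i < n), transp n i h1 ⟨i, p⟩ = ⟨i + 1, h1⟩ := by
    intro p; unfold transp; exact Equiv.swap_apply_left _ _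
  have hsB : ∀ (p : i + 1 < n), transp n i h1 ⟨i + 1, p⟩ = ⟨i, by omega⟩ := by
    intro p; unfold transp; exact Equiv.swap_apply_right _ _
  have hsC : ∀ (p : i + 1 + 1 < n), transp n i h1 ⟨i + 1 + 1, p⟩ = ⟨i + 1 + 1, p⟩ := by
    intro p; unfold transp
    exact Equiv.swap_apply_of_ne_of_ne (by simp only [ne_eq, Fin.mk.injEq]; omega)
      (by simp only [ne_eq, Fin.mk.injEq]; omega)
  have htB : ∀ (p : i + 1 < n), transp n (i + 1) h ⟨i + 1, p⟩ = ⟨i + 1 + 1, h⟩ := by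
    intro p; unfold transp; exact Equiv.swap_apply_left _ _
  have htC : ∀ (p : i + 1 + 1 < n), transp n (i + 1) h ⟨i + 1 + 1, p⟩ = ⟨i + 1, by omega⟩ := by
    intro p; unfold transp; exact Equiv.swap_apply_right _ _
  have htA : ∀ (p : i < n), transp n (i + 1) h ⟨i, p⟩ = ⟨i, p⟩ := by
    intro p; unfold transp
    exact Equiv.swap_apply_of_ne_of_ne (by simp only [ne_eq, Fin.mk.injEq]; omega)
      (by simp only [ne_eq, Fin.mk.injEq]; omega)
  have hL : transp n i h1 * transp n (i + 1) h * transp n i h1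
      = Equiv.swap (⟨i, by omega⟩ : Fin n) ⟨i + 1 + 1, h⟩ := by
    unfold transp
    rw [Equiv.swap_comm (⟨i, by omega⟩ : Fin n) ⟨i + 1, h1⟩,
      Equiv.swap_comm (⟨i + 1, by omega⟩ : Fin n) ⟨i + 1 + 1, h⟩]
    exact Equiv.swap_mul_swap_mul_swap (Ne.symm hneBC) (Ne.symm hneAC)
  have hR : transp n (i + 1) h * transp n i h1 * transp n (i + 1) h
      = Equiv.swap (⟨i, by omega⟩ : Fin n) ⟨i + 1 + 1, h⟩ := by
    unfold transp
    exact (Equiv.swap_mul_swap_mul_swap hneAB hneAC).trans (Equiv.swap_comm _ _)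
  have hbraid : transp n i h1 * transp n (i + 1) h * transp n i h1
      = transp n (i + 1) h * transp n i h1 * transp n (i + 1) h := hL.trans hR.symm
  refine LinearMap.ext fun f => ?_
  have hbraidf : rename (⇑(transp n (i + 1) h)) (rename (⇑(transp n i h1))
        (rename (⇑(transp n (i + 1) h)) f))
      = rename (⇑(transp n i h1)) (rename (⇑(transp n (i + 1) h))
        (rename (⇑(transp n i h1)) f)) := by
    rw [rename_rename, rename_rename, rename_rename, rename_rename,
      ← Equiv.Perm.coe_mul, ← Equiv.Perm.coe_mul, ← Equiv.Perm.coe_mul, ← Equiv.Perm.coe_mul,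
      hbraid]
  simp only [LinearMap.coe_comp, Function.comp_apply, Bop_apply dd hdd]
  have e1 := hdd i h1 f
  have k1 := hdd (i + 1) h f
  have e2 := hdd (i + 1) h (f - (X ⟨i, by omega⟩ - C q * X ⟨i + 1, h1⟩) * dd i h1 f)
  have k2 := hdd i h1 (f - (X ⟨i + 1, by omega⟩ - C q * X ⟨i + 1 + 1, h⟩) * dd (i + 1) h f)
  have e3 := hdd i h1 ((f - (X ⟨i, by omega⟩ - C q * X ⟨i + 1, h1⟩) * dd i h1 f)
    - (X ⟨i + 1, by omega⟩ - C q * X ⟨i + 1 + 1, h⟩)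
      * dd (i + 1) h (f - (X ⟨i, by omega⟩ - C q * X ⟨i + 1, h1⟩) * dd i h1 f))
  have k3 := hdd (i + 1) h ((f - (X ⟨i + 1, by omega⟩ - C q * X ⟨i + 1 + 1, h⟩) * dd (i + 1) h f)
    - (X ⟨i, by omega⟩ - C q * X ⟨i + 1, h1⟩)
      * dd i h1 (f - (X ⟨i + 1, by omega⟩ - C q * X ⟨i + 1 + 1, h⟩) * dd (i + 1) h f))
  have e1t := congrArg (rename (⇑(transp n (i + 1) h))) e1
  have k1s := congrArg (rename (⇑(transp n i h1))) k1
  simp only [map_sub, map_mul, rename_X, rename_C, hsA, hsB, hsC, htA, htB, htC,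
    dd_inv dd hdd, hbraidf] at e1 k1 e2 k2 e3 k3 e1t k1s
  have e1st := congrArg (rename (⇑(transp n i h1))) e1t
  have k1ts := congrArg (rename (⇑(transp n (i + 1) h))) k1s
  have e2s := congrArg (rename (⇑(transp n i h1))) e2
  have k2t := congrArg (rename (⇑(transp n (i + 1) h))) k2
  simp only [map_sub, map_mul, rename_X, rename_C, hsA, hsB, hsC, htA, htB, htC,
    dd_inv dd hdd, hbraidf] at e1st k1ts e2s k2t ⊢
  refine mul_left_cancel₀ (a := ((X ⟨i, by omega⟩ - X ⟨i + 1, h1⟩) ^ 2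
    * (X ⟨i + 1, by omega⟩ - X ⟨i + 1 + 1, h⟩) ^ 2
    * (X ⟨i, by omega⟩ - X ⟨i + 1 + 1, h⟩) : Pn n))
    (mul_ne_zero (mul_ne_zero (pow_ne_zero 2 (Xsub_ne_s17 hneAB)) (pow_ne_zero 2 (Xsub_ne_s17 hneBC)))
      (Xsub_ne_s17 hneAC)) ?_
  set xa : Pn n := X ⟨i, by omega⟩ with hxa
  set xb : Pn n := X ⟨i + 1, h1⟩ with hxb
  set xc : Pn n := X ⟨i + 1 + 1, h⟩ with hxc
  linear_combination
    (-((xa - xb) * (xb - xc) ^ 2 * (xa - xc) * (xa - C q * xb))) * e3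
    + (xa - xb) ^ 2 * (xb - xc) * (xa - xc) * (xb - C q * xc) * k3
    - (xa - xb) * (xb - xc) ^ 2 * (xa - C q * xb) * (xa - C q * xc) * e2s
    + (xa - xb) ^ 2 * (xb - xc) * (xa - C q * xc) * (xb - C q * xc) * k2t
    + (xa - xb) * (xb - xc) * (xa - xc) * (xb - C q * xc) * (1 - C q) * xb * e2
    - (xa - xb) * (xb - xc) * (xa - xc) * (xa - C q * xb) * (1 - C q) * xc * k2
    - (xa - xb) * (xb - xc) * (xa - C q * xb) * (xa - C q * xc) * (xb - C q * xc) * e1st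
    + (xa - xb) * (xb - xc) * (xa - C q * xb) * (xa - C q * xc) * (xb - C q * xc) * k1ts
    + (xa - xb) * (xb - xc) * (xa - C q * xc) * (xb - C q * xc) * (1 - C q) * xb * e1t
    - (xa - xb) * (xb - xc) * (xa - C q * xb) * (xa - C q * xc) * (1 - C q) * xc * k1s
    - (xa - xb) * (xb - xc) * (xa - C q * xb) * (xb - C q * xc) * (1 - C q) * xc * e1
    + (xa - xb) * (xb - xc) * (xa - C q * xb) * (xb - C q * xc) * (1 - C q) * xc * k1


/-- the operators `B_i = -(∂_i ∘ X_{i+1} - q X_{i+1} ∘ ∂_i)` satisfy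
the Hecke algebra relations. -/
theorem stmt17 (n : ℕ) (hn : 2 ≤ n) (dd : DDFam n) (hdd : IsDD dd) :
    HeckeRels (fun i h => Bop dd i h) := by
  refine ⟨fun i h => ?_, fun i j hi hj hij => ?_, fun i h => ?_⟩
  · exact braid_aux n dd hdd i h (by omega)
  · rcases hij with hlt | hlt
    · exact comm_aux n dd hdd i j hi hj hlt
    · exact (comm_aux n dd hdd j i hj hi hlt).symm
  · exact quad_aux n dd hdd i h

end
end
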